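/- (Set-level, one-variable form of Theorem 2.1: the free monad on a polynomial endofunctor is given by trees.) Let B be a type and E : B → Type, with associated polynomial endofunctor P(Y) = Σ_{b : B} (E b → Y). For every type X, the W-type over the index type X ⊕ B with branching given by (inl x ↦ Empty, inr b ↦ E b) — that is, the initial algebra of Y ↦ X + P(Y), which is the value at X of the free monad on P — is equivalent to Σ_{t : PTree} (Leaves t → X), the type of P-trees whose leaves are decorated by elements of X. -/
import Mathlib


/-- The type of `P`-trees for the polynomial endofunctor `P(Y) = Σ_{b : B} (E b → Y)`:
the W-type over the index type `PUnit ⊕ B` with branching `Empty` at `inl` (leaf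
nodes) and `E b` at `inr b`. -/
def PTree (B : Type) (E : B → Type) : Type :=
  WType (fun x : PUnit ⊕ B => Sum.elim (fun _ => Empty) E x)

/-- The leaves of a `P`-tree: a leaf node has `PUnit` many leaves, and a node
`(b, f)` has `Σ_{e : E b} Leaves (f e)` many. -/
def PTree.Leaves {B : Type} {E : B → Type} : PTree B E → Type
  | WType.mk (Sum.inl _) _ => PUnit
  | WType.mk (Sum.inr b) f => Σ e : E b, PTree.Leaves (f e)

section Aux

variable {B : Type} {E : B → Type} {X : Type}

def fwd : (WType fun x : X ⊕ B => Sum.elim (fun _ => Empty) E x) →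
    Σ t : PTree B E, (t.Leaves → X)
  | WType.mk (Sum.inl x) _ => ⟨WType.mk (Sum.inl PUnit.unit) Empty.elim, fun _ => x⟩
  | WType.mk (Sum.inr b) f =>
      ⟨WType.mk (Sum.inr b) (fun e => (fwd (f e)).1),
       fun l => (fwd (f l.1)).2 l.2⟩

def bwd : (t : PTree B E) → (t.Leaves → X) →
    (WType fun x : X ⊕ B => Sum.elim (fun _ => Empty) E x)
  | WType.mk (Sum.inl _) _, d => WType.mk (Sum.inl (d PUnit.unit)) Empty.elim
  | WType.mk (Sum.inr b) f, d =>
      WType.mk (Sum.inr b) (fun e => bwd (f e) (fun l => d ⟨e, l⟩))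

theorem bwd_fwd (w : WType fun x : X ⊕ B => Sum.elim (fun _ => Empty) E x) :
    bwd (fwd w).1 (fwd w).2 = w := by
  induction w with
  | mk a f ih =>
    cases a with
    | inl x =>
      simp only [fwd, bwd]
      congr
      funext e; exact e.elim
    | inr b =>
      simp only [fwd, bwd]
      congr 1
      funext e; exact ih e

def node (b : B) (g : E b → Σ t : PTree B E, (t.Leaves → X)) :
    Σ t : PTree B E, (t.Leaves → X) :=
  ⟨WType.mk (Sum.inr b) (fun e => (g e).1), fun l => (g l.1).2 l.2⟩

theorem fwd_bwd (t : PTree B E) (d : t.Leaves → X) : fwd (bwd t d) = ⟨t, d⟩ := by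
  induction t with
  | mk a f ih =>
    cases a with
    | inl u =>
      cases u
      have hf : f = Empty.elim := funext fun e => e.elim
      subst hf
      show (⟨WType.mk (Sum.inl PUnit.unit) Empty.elim, fun _ => d PUnit.unit⟩ :
        Σ t : PTree B E, (t.Leaves → X)) = _
      congr 1
    | inr b =>
      have key : (fun e => fwd (bwd (f e) fun l => d ⟨e, l⟩)) =
          (fun e => (⟨f e, fun l => d ⟨e, l⟩⟩ : Σ t : PTree B E, (t.Leaves → X))) :=
        funext fun e => ih e _
      calc fwd (bwd (WType.mk (Sum.inr b) f) d)
          = node b (fun e => fwd (bwd (f e) fun l => d ⟨e, l⟩)) := rfl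
        _ = node b (fun e => ⟨f e, fun l => d ⟨e, l⟩⟩) := congrArg (node b) key
        _ = ⟨WType.mk (Sum.inr b) f, d⟩ := rfl

end Aux

/-- The free monad on a polynomial endofunctor is given by trees (set-level,
one-variable): for every type `X`, the initial algebra of `Y ↦ X + P(Y)` — the
W-type over `X ⊕ B` with branching `(inl x ↦ Empty, inr b ↦ E b)` — is equivalent
to the type of `P`-trees with leaves decorated by elements of `X`. -/
theorem freeMonad_eq_decorated_trees (B : Type) (E : B → Type) (X : Type) :
    Nonempty ((WType fun x : X ⊕ B => Sum.elim (fun _ => Empty) E x) ≃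
      Σ t : PTree B E, (t.Leaves → X)) := by
  exact ⟨⟨fwd, fun p => bwd p.1 p.2, bwd_fwd, fun p => fwd_bwd p.1 p.2⟩⟩
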